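/- Let a and b be coprime positive integers. For every integer n ≥ (a-1)(b-1), the equation ax + by = n has a solution in nonnegative integers x and y. -/

import Mathlib

theorem stmt_5 (a b : ℕ) (ha : 0 < a) (hb : 0 < b) (hab : Nat.Coprime a b)
    (n : ℕ) (hn : (a - 1) * (b - 1) ≤ n) :
    ∃ x y : ℕ, a * x + b * y = n := by
  rcases eq_or_lt_of_le (show 1 ≤ a from ha) with ha1 | ha1
  · exact ⟨n, 0, by simp [← ha1]⟩
  rcases eq_or_lt_of_le (show 1 ≤ b from hb) with hb1 | hb1
  · exact ⟨0, n, by simp [← hb1]⟩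
  have h := (frobeniusNumber_pair hab ha1 hb1).2
  by_contra hc
  push_neg at hc
  have hmem : n ∉ AddSubmonoid.closure ({a, b} : Set ℕ) := by
    intro hmem
    rw [AddSubmonoid.mem_closure_pair] at hmem
    obtain ⟨x, y, hxy⟩ := hmem
    exact hc x y (by simpa [smul_eq_mul, mul_comm] using hxy)
  have hle : n ≤ a * b - a - b := h hmem
  -- but (a-1)*(b-1) = a*b - a - b + 1 > a*b - a - b
  have hab' : a + b ≤ a * b := Nat.add_le_mul ha1 hb1
  have : (a - 1) * (b - 1) = a * b - a - b + 1 := by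
    cases a with
    | zero => omega
    | succ a' => cases b with
      | zero => omega
      | succ b' =>
          have h1 : (a' + 1) * (b' + 1) = a' * b' + a' + b' + 1 := by ring
          simp only [Nat.succ_sub_one]
          omega
  omega
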